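/- Let A0 be symmetric positive definite and K a matrix with A0·K symmetric. Then for every vector v, ⟨v, K⁺ v⟩_{A0} ≥ 0, where ⟨u,v⟩_{A0} = uᵀ A0 v, and ⟨v, K⁺ v⟩_{A0} = 0 implies K⁺ v = 0. -/

import Mathlib

open Matrix

/-- `Mp` is a positive part of `M`: for some diagonalization `M = P D P⁻¹`,
`Mp = P D⁺ P⁻¹` where `D⁺` replaces each diagonal entry by its positive part. -/
def Matrix.IsPosPartOf {m : ℕ} (M Mp : Matrix (Fin m) (Fin m) ℝ) : Prop :=
  ∃ P D : Matrix (Fin m) (Fin m) ℝ, IsUnit P ∧ D.IsDiag ∧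
    M = P * D * P⁻¹ ∧ Mp = P * (Matrix.of fun i j => max (D i j) 0) * P⁻¹

private lemma quad_aux {m : ℕ} (C N : Matrix (Fin m) (Fin m) ℝ) (x : Fin m → ℝ) :
    x ⬝ᵥ ((Nᵀ * C * N) *ᵥ x) = (N *ᵥ x) ⬝ᵥ (C *ᵥ (N *ᵥ x)) := by
  rw [Matrix.mul_assoc, ← mulVec_mulVec, dotProduct_mulVec, vecMul_transpose, ← mulVec_mulVec]

theorem stmt1 {m : ℕ} (A0 K Kp : Matrix (Fin m) (Fin m) ℝ)
    (hA0sym : A0.IsSymm) (hA0pd : A0.PosDef) (hsym : (A0 * K).IsSymm)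
    (hKp : K.IsPosPartOf Kp) :
    ∀ v : Fin m → ℝ,
      0 ≤ v ⬝ᵥ (A0 *ᵥ (Kp *ᵥ v)) ∧
      (v ⬝ᵥ (A0 *ᵥ (Kp *ᵥ v)) = 0 → Kp *ᵥ v = 0) := by
  obtain ⟨P, D, hP, hD, hK, hKpEq⟩ := hKp
  have hPdet : IsUnit P.det := (Matrix.isUnit_iff_isUnit_det P).mp hP
  have hPP : P * P⁻¹ = 1 := Matrix.mul_nonsing_inv P hPdet
  have hPPl : P⁻¹ * P = 1 := Matrix.nonsing_inv_mul P hPdet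
  have hPtPi : Pᵀ * P⁻¹ᵀ = 1 := by
    rw [← Matrix.transpose_mul, hPPl, Matrix.transpose_one]
  have hPitPt : P⁻¹ᵀ * Pᵀ = 1 := by
    rw [← Matrix.transpose_mul, hPP, Matrix.transpose_one]
  have hDdiag : D = Matrix.diagonal (fun i => D i i) := (hD.diagonal_diag).symm
  have hDT : Dᵀ = D := by rw [hDdiag]; exact Matrix.diagonal_transpose _
  set S : Matrix (Fin m) (Fin m) ℝ :=
    Matrix.diagonal (fun i => Real.sqrt (max (D i i) 0)) with hS
  have hSsym : Sᵀ = S := Matrix.diagonal_transpose _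
  have hSS : S * S = (Matrix.of fun i j => max (D i j) 0) := by
    rw [hS, Matrix.diagonal_mul_diagonal]
    ext i j
    by_cases hij : i = j
    · subst hij
      simp [Matrix.diagonal_apply_eq, Real.mul_self_sqrt (le_max_right _ _)]
    · simp [Matrix.diagonal_apply_ne _ hij, hD hij, hij]
  set B : Matrix (Fin m) (Fin m) ℝ := Pᵀ * A0 * P with hB
  have hBpd : B.PosDef := by
    refine Matrix.PosDef.of_dotProduct_mulVec_pos ?_ ?_
    · show Bᴴ = B
      have h : Bᴴ = Bᵀ := rfl
      rw [h, hB, Matrix.transpose_mul, Matrix.transpose_mul,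
        Matrix.transpose_transpose, hA0sym.eq, Matrix.mul_assoc]
    · intro x hx
      have hPx : P *ᵥ x ≠ 0 := by
        intro h0
        apply hx
        have h : P⁻¹ *ᵥ (P *ᵥ x) = x := by rw [mulVec_mulVec, hPPl, one_mulVec]
        rw [← h, h0, mulVec_zero]
      have hpos := hA0pd.dotProduct_mulVec_pos hPx
      simpa [hB, star_trivial, quad_aux A0 P x] using hpos
  -- commutation B * D = D * B
  have hBD : B * D = D * B := by
    have hsym' : (A0 * K)ᵀ = A0 * K := hsym.eq
    calc B * D = Pᵀ * (A0 * K) * P := by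
          rw [hK, hB]
          simp only [Matrix.mul_assoc, hPPl, Matrix.mul_one]
      _ = Pᵀ * (A0 * K)ᵀ * P := by rw [hsym']
      _ = D * B := by
          rw [hK]
          simp only [Matrix.transpose_mul, hDT, hA0sym.eq, Matrix.mul_assoc]
          rw [← Matrix.mul_assoc Pᵀ P⁻¹ᵀ, hPtPi, Matrix.one_mul, hB]
          simp only [Matrix.mul_assoc]
  -- commutation B * S = S * B
  have hBS : B * S = S * B := by
    ext i j
    rw [hS, Matrix.mul_diagonal, Matrix.diagonal_mul]
    by_cases hb : B i j = 0
    · simp [hb]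
    · have hd : D i i = D j j := by
        have h1 := congrFun (congrFun hBD i) j
        rw [hDdiag] at h1
        rw [Matrix.mul_diagonal, Matrix.diagonal_mul] at h1
        exact mul_left_cancel₀ hb (by rw [h1]; ring)
      rw [hd, mul_comm]
  intro v
  set w : Fin m → ℝ := P⁻¹ *ᵥ v with hw
  set u : Fin m → ℝ := S *ᵥ w with hu
  have hM : A0 * Kp = P⁻¹ᵀ * (Sᵀ * B * S) * P⁻¹ := by
    have hSBS : Sᵀ * B * S = B * (S * S) := by
      rw [hSsym, ← hBS, Matrix.mul_assoc]
    rw [hSBS, hSS, hKpEq, hB]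
    calc A0 * ((P * of fun i j => max (D i j) 0) * P⁻¹)
        = (P⁻¹ᵀ * Pᵀ) * (A0 * ((P * of fun i j => max (D i j) 0) * P⁻¹)) := by
          rw [hPitPt, Matrix.one_mul]
      _ = P⁻¹ᵀ * (Pᵀ * A0 * P * (of fun i j => max (D i j) 0)) * P⁻¹ := by
          simp only [Matrix.mul_assoc]
  have hKpv : Kp *ᵥ v = P *ᵥ (S *ᵥ u) := by
    rw [hKpEq, ← hSS, hu, hw]
    simp only [← mulVec_mulVec, Matrix.mul_assoc]
  have key : v ⬝ᵥ (A0 *ᵥ (Kp *ᵥ v)) = u ⬝ᵥ (B *ᵥ u) := by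
    rw [mulVec_mulVec, hM, quad_aux (Sᵀ * B * S) P⁻¹ v, ← hw, quad_aux B S w, ← hu]
  constructor
  · rw [key]
    have hps := hBpd.posSemidef.dotProduct_mulVec_nonneg u
    simpa [star_trivial] using hps
  · intro h0
    rw [key] at h0
    have hu0 : u = 0 := by
      by_contra hne
      have hpos := hBpd.dotProduct_mulVec_pos hne
      rw [star_trivial] at hpos
      exact absurd h0 (ne_of_gt hpos)
    rw [hKpv, hu0, mulVec_zero, mulVec_zero]
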